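/- Assume that for every (β, s) ∈ Δ(Ω) × S the receiver's best response â(β, s) = argmax_{a∈A} ∑_ω β(ω) u(s, a, ω) is unique, and set v̂(β, s) = ∑_ω β(ω) v(s, â(β, s), ω). Let E = {(μ, z) ∈ Δ(Ω) × ℝ : z is the sender's expected payoff in some Perfect Bayesian Equilibrium at prior μ}. Then for every μ0 ∈ Δ(Ω), sup{z : (μ0, z) ∈ convexHull(E)} = sup{z : (μ0, z) ∈ convexHull(⋃_{s∈S} v̂_s^P)}, where both suprema are taken in the extended reals. That is, the sender's pre-persuasion value equals the concave envelope of the pooling payoff graphs. -/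

import Mathlib

open scoped BigOperators

noncomputable section

/-- `(π, β, α)` is a Perfect Bayesian Equilibrium of the finite signaling game at
prior `μ`. -/
def IsPBE {Ω S A : Type*} [Fintype Ω] [Fintype S] [Fintype A]
    (v u : S → A → Ω → ℝ) (μ : Ω → ℝ)
    (π : Ω → S → ℝ) (β : S → Ω → ℝ) (α : S → A) : Prop :=
  (∀ ω, π ω ∈ stdSimplex ℝ S) ∧ (∀ s, β s ∈ stdSimplex ℝ Ω) ∧
  (∀ s, 0 < (∑ ω, μ ω * π ω s) →
    ∀ ω, β s ω = μ ω * π ω s / ∑ ω', μ ω' * π ω' s) ∧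
  (∀ s a, (∑ ω, β s ω * u s a ω) ≤ (∑ ω, β s ω * u s (α s) ω)) ∧
  (∀ ω, 0 < μ ω → ∀ s, 0 < π ω s → ∀ s', v s' (α s') ω ≤ v s (α s) ω)

/-- The set of pairs (prior, sender expected payoff) arising in some PBE. -/
def PBEGraph {Ω S A : Type*} [Fintype Ω] [Fintype S] [Fintype A]
    (v u : S → A → Ω → ℝ) : Set ((Ω → ℝ) × ℝ) :=
  {q | q.1 ∈ stdSimplex ℝ Ω ∧
    ∃ (π : Ω → S → ℝ) (β : S → Ω → ℝ) (α : S → A),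
      IsPBE v u q.1 π β α ∧ q.2 = ∑ ω, q.1 ω * ∑ s, π ω s * v s (α s) ω}

/-- A pooling equilibrium exists at `(μb, sb)`. -/
def PoolingAt {Ω S A : Type*} [Fintype Ω] [Fintype S] [Fintype A]
    (v u : S → A → Ω → ℝ) (μb : Ω → ℝ) (sb : S) : Prop :=
  ∃ (β : S → Ω → ℝ) (α : S → A),
    (∀ t, β t ∈ stdSimplex ℝ Ω) ∧ β sb = μb ∧
    (∀ t a, (∑ ω, β t ω * u t a ω) ≤ (∑ ω, β t ω * u t (α t) ω)) ∧
    (∀ ω, 0 < μb ω → ∀ s', v s' (α s') ω ≤ v sb (α sb) ω)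

/-- The pooling payoff graph of action `s`, with interim payoffs computed using the
receiver's (unique) best response `arg`. -/
def poolingGraph {Ω S A : Type*} [Fintype Ω] [Fintype S] [Fintype A]
    (v u : S → A → Ω → ℝ) (arg : (Ω → ℝ) → S → A) (s : S) :
    Set ((Ω → ℝ) × ℝ) :=
  {q | q.1 ∈ stdSimplex ℝ Ω ∧ PoolingAt v u q.1 s ∧
    q.2 = ∑ ω, q.1 ω * v s (arg q.1 s) ω}

section Aux
set_option linter.unusedSectionVars false
variable {Ω S A : Type*} [Fintype Ω] [Fintype S] [Fintype A]
  (v u : S → A → Ω → ℝ) (arg : (Ω → ℝ) → S → A)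

lemma alpha_eq_arg
    (harg : ∀ β ∈ stdSimplex ℝ Ω, ∀ (s : S) (a : A), a ≠ arg β s →
      (∑ ω, β ω * u s a ω) < (∑ ω, β ω * u s (arg β s) ω))
    {β : Ω → ℝ} (hβ : β ∈ stdSimplex ℝ Ω) (s : S) (a : A)
    (hopt : ∀ a', (∑ ω, β ω * u s a' ω) ≤ (∑ ω, β ω * u s a ω)) :
    a = arg β s := by
  by_contra h
  exact absurd (hopt (arg β s)) (not_le.2 (harg β hβ s a h))

lemma pooling_subset_PBE
    (harg : ∀ β ∈ stdSimplex ℝ Ω, ∀ (s : S) (a : A), a ≠ arg β s →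
      (∑ ω, β ω * u s a ω) < (∑ ω, β ω * u s (arg β s) ω)) (s : S) :
    poolingGraph v u arg s ⊆ PBEGraph v u := by
  classical
  rintro ⟨μ, z⟩ ⟨hμ, ⟨β, α, hβ, hβs, hrec, hsend⟩, hz⟩
  dsimp only at hμ hβs hrec hsend hz ⊢
  have hαs : α s = arg μ s := by
    have := alpha_eq_arg u arg harg (hβ s) s (α s) (hrec s)
    rwa [hβs] at this
  refine ⟨hμ, fun _ t => if t = s then 1 else 0, β, α,
    ⟨fun ω => ⟨fun t => by by_cases h : t = s <;> simp [h], by simp⟩, hβ, ?_, hrec, ?_⟩, ?_⟩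
  · intro t ht ω
    by_cases h : t = s
    · subst h
      simp [hβs, hμ.2]
    · simp only [if_neg h, mul_zero] at ht
      simp at ht
  · intro ω hω t hπ s'
    by_cases h : t = s
    · subst h; exact hsend ω hω s'
    · simp [if_neg h] at hπ
  · simp [ite_mul, hz, hαs]

lemma PBE_subset_hull
    (harg : ∀ β ∈ stdSimplex ℝ Ω, ∀ (s : S) (a : A), a ≠ arg β s →
      (∑ ω, β ω * u s a ω) < (∑ ω, β ω * u s (arg β s) ω)) :
    PBEGraph v u ⊆ convexHull ℝ (⋃ s : S, poolingGraph v u arg s) := by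
  classical
  rintro ⟨μ, z⟩ ⟨hμ, π, β, α, ⟨hπ, hβ, hcons, hrec, hsend⟩, hz⟩
  dsimp only at hμ hcons hsend hz
  set p : S → ℝ := fun s => ∑ ω, μ ω * π ω s with hpdef
  have hp0 : ∀ s, 0 ≤ p s := fun s =>
    Finset.sum_nonneg fun ω _ => mul_nonneg (hμ.1 ω) ((hπ ω).1 s)
  have hzero : ∀ s, ¬ 0 < p s → ∀ ω, μ ω * π ω s = 0 := by
    intro s hs ω
    have hps : p s = 0 := le_antisymm (not_lt.1 hs) (hp0 s)
    have := (Finset.sum_eq_zero_iff_of_nonneg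
      (fun ω _ => mul_nonneg (hμ.1 ω) ((hπ ω).1 s))).1 hps
    exact this ω (Finset.mem_univ ω)
  have hαarg : ∀ s, α s = arg (β s) s := fun s =>
    alpha_eq_arg u arg harg (hβ s) s (α s) (hrec s)
  have hkey : ∀ s, 0 < p s → ∀ ω, p s * β s ω = μ ω * π ω s := by
    intro s hs ω
    rw [hcons s hs ω]
    have hs' : p s ≠ 0 := ne_of_gt hs
    change p s * (μ ω * π ω s / p s) = _
    field_simp
  set t : Finset S := Finset.univ.filter (fun s => 0 < p s) with htdef
  set P : S → (Ω → ℝ) × ℝ := fun s => (β s, ∑ ω, β s ω * v s (α s) ω) with hPdef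
  have hmem : ∀ s ∈ t, P s ∈ ⋃ s : S, poolingGraph v u arg s := by
    intro s hs
    rw [Finset.mem_filter] at hs
    refine Set.mem_iUnion.2 ⟨s, hβ s, ⟨β, α, hβ, rfl, hrec, ?_⟩, ?_⟩
    · intro ω hω s'
      have hnum : 0 < μ ω * π ω s := by
        have := hkey s hs.2 ω
        nlinarith [hs.2]
      have hμω : 0 < μ ω := by
        rcases lt_or_eq_of_le (hμ.1 ω) with h | h
        · exact h
        · exfalso; rw [← h] at hnum; simp at hnum
      have hπω : 0 < π ω s := by
        rcases lt_or_eq_of_le ((hπ ω).1 s) with h | h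
        · exact h
        · exfalso; rw [← h] at hnum; simp at hnum
      exact hsend ω hμω s hπω s'
    · simp only [hPdef, ← hαarg s]
  have hsum1 : ∑ s ∈ t, p s = 1 := by
    have h1 : ∑ s ∈ t, p s = ∑ s, p s := by
      apply Finset.sum_subset (Finset.filter_subset _ _)
      intro s _ hs
      rw [Finset.mem_filter] at hs
      push_neg at hs
      exact le_antisymm (hs (Finset.mem_univ s)) (hp0 s)
    rw [h1, hpdef]
    rw [Finset.sum_comm]
    simp_rw [← Finset.mul_sum]
    calc ∑ ω, μ ω * ∑ s, π ω s = ∑ ω, μ ω := by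
          apply Finset.sum_congr rfl; intro ω _; rw [(hπ ω).2, mul_one]
      _ = 1 := hμ.2
  have heq : (μ, z) = t.centerMass p P := by
    rw [Finset.centerMass_eq_of_sum_1 _ _ hsum1]
    apply Prod.ext
    · show μ = (∑ s ∈ t, p s • P s).1
      rw [Prod.fst_sum]
      simp only [Prod.smul_fst]
      funext ω
      rw [Finset.sum_apply]
      have : ∀ s ∈ t, (p s • (P s).1) ω = μ ω * π ω s := by
        intro s hs
        rw [Finset.mem_filter] at hs
        simp only [hPdef, Pi.smul_apply, smul_eq_mul]
        exact hkey s hs.2 ω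
      rw [Finset.sum_congr rfl this]
      rw [Finset.sum_subset (Finset.filter_subset _ _)
        (fun s _ hs => by rw [Finset.mem_filter] at hs; push_neg at hs
                          exact hzero s (fun h => absurd (hs (Finset.mem_univ s)) (not_le.2 h)) ω)]
      rw [← Finset.mul_sum, (hπ ω).2, mul_one]
    · show z = (∑ s ∈ t, p s • P s).2
      rw [Prod.snd_sum]
      simp only [Prod.smul_snd]
      have : ∀ s ∈ t, p s • (P s).2 = ∑ ω, (μ ω * π ω s) * v s (α s) ω := by
        intro s hs
        rw [Finset.mem_filter] at hs
        simp only [hPdef, smul_eq_mul, Finset.mul_sum]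
        apply Finset.sum_congr rfl
        intro ω _
        rw [← mul_assoc, hkey s hs.2 ω]
      rw [Finset.sum_congr rfl this]
      rw [Finset.sum_subset (Finset.filter_subset _ _)]
      · rw [hz, Finset.sum_comm]
        apply Finset.sum_congr rfl
        intro ω _
        rw [Finset.mul_sum]
        apply Finset.sum_congr rfl
        intro s _
        ring
      · intro s _ hs
        rw [Finset.mem_filter] at hs; push_neg at hs
        apply Finset.sum_eq_zero
        intro ω _
        rw [hzero s (fun h => absurd (hs (Finset.mem_univ s)) (not_le.2 h)) ω, zero_mul]
  rw [heq]
  exact Finset.centerMass_mem_convexHull t (fun s _ => hp0 s) (by rw [hsum1]; norm_num) hmem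

end Aux

/-- Assuming unique receiver best responses, the sender's
pre-persuasion value (the concave envelope of the PBE payoff graph) equals the
concave envelope of the pooling payoff graphs, with suprema in the extended reals. -/
theorem pre_persuasion_value_eq_concavification_of_pooling_graphs
    {Ω S A : Type*} [Fintype Ω] [Nonempty Ω] [Fintype S] [Nonempty S]
    [Fintype A] [Nonempty A]
    (v u : S → A → Ω → ℝ)
    (arg : (Ω → ℝ) → S → A)
    (harg : ∀ β ∈ stdSimplex ℝ Ω, ∀ (s : S) (a : A), a ≠ arg β s →
      (∑ ω, β ω * u s a ω) < (∑ ω, β ω * u s (arg β s) ω))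
    (μ0 : Ω → ℝ) (hμ0 : μ0 ∈ stdSimplex ℝ Ω) :
    sSup (Real.toEReal ''
        {z : ℝ | ((μ0, z) : (Ω → ℝ) × ℝ) ∈ convexHull ℝ (PBEGraph v u)}) =
      sSup (Real.toEReal ''
        {z : ℝ | ((μ0, z) : (Ω → ℝ) × ℝ) ∈
          convexHull ℝ (⋃ s : S, poolingGraph v u arg s)}) := by
  have hEq : convexHull ℝ (PBEGraph v u)
      = convexHull ℝ (⋃ s : S, poolingGraph v u arg s) := by
    apply le_antisymm
    · exact convexHull_min (PBE_subset_hull v u arg harg) (convex_convexHull ℝ _)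
    · exact convexHull_mono (Set.iUnion_subset fun s => pooling_subset_PBE v u arg harg s)
  rw [hEq]
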